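/- If f_1, ..., f_N are unit vectors in C^d with N >= d, then the maximum over i ≠ j of |⟨f_i, f_j⟩| is at least sqrt((N-d)/(d(N-1))). -/

import Mathlib

open Finset Matrix

theorem welch_bound (d N : ℕ) (hd : 0 < d) (hN : d ≤ N) (hN2 : 2 ≤ N)
    (f : Fin N → EuclideanSpace ℂ (Fin d)) (hnorm : ∀ i, ‖f i‖ = 1) :
    ∃ i j : Fin N, i ≠ j ∧
      Real.sqrt (((N : ℝ) - d) / (d * ((N : ℝ) - 1))) ≤ ‖(inner ℂ (f i) (f j) : ℂ)‖ := by
  classical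
  set G : Fin N → Fin N → ℂ := fun i j => inner ℂ (f i) (f j) with hGdef
  set A : Matrix (Fin N) (Fin d) ℂ := Matrix.of (fun i k => f i k) with hAdef
  set B : Fin d → Fin d → ℂ := fun k l => ∑ i : Fin N, (starRingEnd ℂ) (f i k) * f i l
    with hBdef
  have hAAH : ∀ i j, (A * Aᴴ) i j = (starRingEnd ℂ) (G i j) := by
    intro i j
    simp [Matrix.mul_apply, Matrix.conjTranspose_apply, hGdef, hAdef, PiLp.inner_apply,
      RCLike.inner_apply, map_sum, mul_comm]
  have hAHA : ∀ k l, (Aᴴ * A) k l = B k l := by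
    intro k l
    simp [Matrix.mul_apply, Matrix.conjTranspose_apply, hBdef, hAdef]
  have hGsymm : ∀ i j, (starRingEnd ℂ) (G j i) = G i j := fun i j => inner_conj_symm _ _
  have hBsymm : ∀ k l, (starRingEnd ℂ) (B l k) = B k l := by
    intro k l
    simp [hBdef, map_sum, _root_.map_mul, mul_comm]
  have tr_eq : ((A * Aᴴ) * (A * Aᴴ)).trace = ((Aᴴ * A) * (Aᴴ * A)).trace := by
    rw [Matrix.mul_assoc A Aᴴ (A * Aᴴ), Matrix.trace_mul_comm]
    simp only [Matrix.mul_assoc]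
  have lhs_eq : ((A * Aᴴ) * (A * Aᴴ)).trace
      = ∑ i : Fin N, ∑ j : Fin N, (Complex.normSq (G i j) : ℂ) := by
    rw [Matrix.trace]
    refine Finset.sum_congr rfl fun i _ => ?_
    rw [Matrix.diag, Matrix.mul_apply]
    refine Finset.sum_congr rfl fun j _ => ?_
    rw [hAAH i j, hAAH j i, hGsymm i j, mul_comm, Complex.mul_conj]
  have rhs_eq : ((Aᴴ * A) * (Aᴴ * A)).trace
      = ∑ k : Fin d, ∑ l : Fin d, (Complex.normSq (B k l) : ℂ) := by
    rw [Matrix.trace]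
    refine Finset.sum_congr rfl fun k _ => ?_
    rw [Matrix.diag, Matrix.mul_apply]
    refine Finset.sum_congr rfl fun l _ => ?_
    rw [hAHA, hAHA, ← hBsymm l k, Complex.mul_conj]
  have sum_eq : ∑ i : Fin N, ∑ j : Fin N, Complex.normSq (G i j)
      = ∑ k : Fin d, ∑ l : Fin d, Complex.normSq (B k l) := by
    have := lhs_eq.symm.trans (tr_eq.trans rhs_eq)
    exact_mod_cast this
  -- diagonal of B
  have hBkk : ∀ k, B k k = ((∑ i : Fin N, Complex.normSq (f i k) : ℝ) : ℂ) := by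
    intro k
    simp [hBdef, Complex.mul_conj', Complex.normSq_eq_conj_mul_self]
  set r : Fin d → ℝ := fun k => ∑ i : Fin N, Complex.normSq (f i k) with hrdef
  have hrsum : ∑ k : Fin d, r k = N := by
    rw [Finset.sum_comm]
    have h1 : ∀ i : Fin N, ∑ k : Fin d, Complex.normSq (f i k) = 1 := by
      intro i
      have : (inner ℂ (f i) (f i) : ℂ) = (1 : ℂ) := by
        rw [inner_self_eq_norm_sq_to_K, hnorm]; norm_num
      rw [PiLp.inner_apply] at this
      have : ((∑ k : Fin d, Complex.normSq (f i k) : ℝ) : ℂ) = (1 : ℂ) := by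
        rw [← this]
        push_cast
        refine Finset.sum_congr rfl fun k _ => ?_
        simp [RCLike.inner_apply, Complex.normSq_eq_conj_mul_self, Complex.conj_mul']
      exact_mod_cast this
    simp [h1]
  -- lower bound N^2/d ≤ S
  have step1 : (N : ℝ)^2 / d ≤ ∑ i : Fin N, ∑ j : Fin N, Complex.normSq (G i j) := by
    rw [sum_eq]
    have hdiag : ∑ k : Fin d, (r k)^2 ≤ ∑ k : Fin d, ∑ l : Fin d, Complex.normSq (B k l) := by
      refine Finset.sum_le_sum fun k _ => ?_
      have : Complex.normSq (B k k) = (r k)^2 := by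
        rw [hBkk, Complex.normSq_ofReal, sq]
      rw [← this]
      exact Finset.single_le_sum (fun l _ => Complex.normSq_nonneg _) (Finset.mem_univ k)
    have hcs : (N : ℝ)^2 ≤ d * ∑ k : Fin d, (r k)^2 := by
      have := sq_sum_le_card_mul_sum_sq (s := (Finset.univ : Finset (Fin d))) (f := r)
      simpa [hrsum] using this
    have hd' : (0:ℝ) < d := by exact_mod_cast hd
    refine le_trans ?_ hdiag
    rw [div_le_iff₀ hd']
    nlinarith [hcs]
  -- the max off-diagonal coherence
  have hne : ((Finset.univ : Finset (Fin N × Fin N)).filter fun p => p.1 ≠ p.2).Nonempty := by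
    refine ⟨(⟨0, by omega⟩, ⟨1, by omega⟩), ?_⟩
    have h01 : ((⟨0, by omega⟩ : Fin N)) ≠ ⟨1, by omega⟩ := by simp [Fin.ext_iff]
    simp [h01]
  obtain ⟨p, hp, hmax⟩ := Finset.exists_max_image _ (fun p : Fin N × Fin N => ‖G p.1 p.2‖) hne
  have hpne : p.1 ≠ p.2 := (Finset.mem_filter.mp hp).2
  set c : ℝ := ‖G p.1 p.2‖ with hcdef
  have hc0 : 0 ≤ c := norm_nonneg _
  -- upper bound on S
  have step2 : ∑ i : Fin N, ∑ j : Fin N, Complex.normSq (G i j)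
      ≤ N + N * ((N:ℝ) - 1) * c^2 := by
    have hbound : ∀ i, ∑ j : Fin N, Complex.normSq (G i j) ≤ 1 + ((N:ℝ) - 1) * c^2 := by
      intro i
      rw [← Finset.add_sum_erase _ _ (Finset.mem_univ i)]
      have hGii : Complex.normSq (G i i) = 1 := by
        have : (G i i) = 1 := by
          rw [hGdef]; simp only []
          rw [inner_self_eq_norm_sq_to_K, hnorm]; norm_num
        rw [this]; simp
      rw [hGii]
      gcongr 1 + ?_
      calc ∑ j ∈ Finset.univ.erase i, Complex.normSq (G i j)
          ≤ ∑ _j ∈ Finset.univ.erase i, c^2 := by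
            refine Finset.sum_le_sum fun j hj => ?_
            have hji : j ≠ i := (Finset.mem_erase.mp hj).1
            have := hmax (i, j) (by simp [Finset.mem_filter, Ne.symm hji])
            have hnn : Complex.normSq (G i j) = ‖G i j‖^2 := by
              rw [← Complex.sq_norm]
            rw [hnn]
            exact pow_le_pow_left₀ (norm_nonneg _) this 2
        _ = ((N:ℝ) - 1) * c^2 := by
            rw [Finset.sum_const, Finset.card_erase_of_mem (Finset.mem_univ i),
              Finset.card_univ, Fintype.card_fin, nsmul_eq_mul]
            push_cast [Nat.cast_sub (by omega : 1 ≤ N)]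
            ring
    calc ∑ i : Fin N, ∑ j : Fin N, Complex.normSq (G i j)
        ≤ ∑ _i : Fin N, (1 + ((N:ℝ) - 1) * c^2) := Finset.sum_le_sum fun i _ => hbound i
      _ = N + N * ((N:ℝ) - 1) * c^2 := by simp [Finset.sum_const, Finset.card_univ]; ring
  -- combine
  refine ⟨p.1, p.2, hpne, ?_⟩
  have hd' : (0:ℝ) < d := by exact_mod_cast hd
  have hN' : (2:ℝ) ≤ N := by exact_mod_cast hN2
  have key : ((N : ℝ) - d) / (d * ((N : ℝ) - 1)) ≤ c^2 := by
    rw [div_le_iff₀ (by nlinarith)]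
    have h := step1.trans step2
    have hNpos : (0:ℝ) < N := by linarith
    have h2 : (N:ℝ)^2 ≤ (N + N * ((N:ℝ) - 1) * c^2) * d := (div_le_iff₀ hd').mp h
    nlinarith [h2, hNpos, sq_nonneg c]
  calc Real.sqrt (((N : ℝ) - d) / (d * ((N : ℝ) - 1)))
      ≤ Real.sqrt (c^2) := Real.sqrt_le_sqrt key
    _ = c := Real.sqrt_sq hc0
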